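/- Let p ≥ 5 be an odd integer, m ≥ 3, and let i_1,…,i_m ∈ C_p be colors, not all equal to 0. Then a chain coloring for (i_1,…,i_m) exists if and only if for every integer k with 0 ≤ 2k+1 ≤ m and every subset {s_1,…,s_{2k+1}} ⊆ {1,…,m} of cardinality 2k+1 one has 2·(i_{s_1}+⋯+i_{s_{2k+1}}) ≤ 2k(p−2) + (i_1+⋯+i_m). -/

import Mathlib

/-- Level-`p` colors for odd `p`: even natural numbers `j` with `j ≤ p - 3`. -/
def ColorOdd (p j : ℕ) : Prop := Even j ∧ j + 3 ≤ p

/-- `p`-admissibility of a triple of colors for odd `p`: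
`|b - c| ≤ a ≤ b + c` and `a + b + c ≤ 2p - 4`. -/
def AdmOdd (p a b c : ℕ) : Prop :=
  b ≤ a + c ∧ c ≤ a + b ∧ a ≤ b + c ∧ a + b + c + 4 ≤ 2 * p

/-- `ChainFrom adm C a l e` : starting from the color `a`, the boundary colors `l`
can be connected by the chain of internal colors `e` (each internal color satisfying `C`),
all consecutive triples being admissible. -/
def ChainFrom (adm : ℕ → ℕ → ℕ → Prop) (C : ℕ → Prop) : ℕ → List ℕ → List ℕ → Prop
  | a, [x, y], [] => adm a x y
  | a, x :: rest, e :: es => C e ∧ adm a x e ∧ ChainFrom adm C e rest es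
  | _, _, _ => False

/-- `IsChainColoring adm C i e` : `e = (e_1, …, e_{m-3})` is a chain coloring for the boundary
tuple `i = (i_1, …, i_m)`, i.e. the triples `(i_1,i_2,e_1), (e_1,i_3,e_2), …,
(e_{m-3}, i_{m-1}, i_m)` are all admissible and each `e_t` is a color. -/
def IsChainColoring (adm : ℕ → ℕ → ℕ → Prop) (C : ℕ → Prop) : List ℕ → List ℕ → Prop
  | i1 :: rest, e => ChainFrom adm C i1 rest e
  | [], _ => False

/-- A chain coloring for the boundary tuple `i` exists. -/
def HasChain (adm : ℕ → ℕ → ℕ → Prop) (C : ℕ → Prop) (i : List ℕ) : Prop :=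
  ∃ e, IsChainColoring adm C i e

namespace Stmt0Aux

def Ok (p : ℕ) (l : List ℕ) : Prop :=
  ∀ s : List ℕ, s.Sublist l → s.length % 2 = 1 →
    2 * (s.sum : ℤ) ≤ ((s.length : ℤ) - 1) * ((p : ℤ) - 2) + (l.sum : ℤ)

lemma le_foldr_max_init (l : List ℤ) (a : ℤ) : a ≤ l.foldr max a := by
  induction l with
  | nil => simp
  | cons x t ih => exact ih.trans (le_max_right _ _)

lemma le_foldr_max_mem {l : List ℤ} {x : ℤ} (a : ℤ) (hx : x ∈ l) : x ≤ l.foldr max a := by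
  induction l with
  | nil => cases hx
  | cons y t ih =>
    rcases List.mem_cons.mp hx with h | h
    · subst h; exact le_max_left _ _
    · exact (ih h).trans (le_max_right _ _)

lemma foldr_max_le {l : List ℤ} {a c : ℤ} (ha : a ≤ c) (h : ∀ x ∈ l, x ≤ c) :
    l.foldr max a ≤ c := by
  induction l with
  | nil => simpa
  | cons y t ih => exact max_le (h y (.head _)) (ih fun x hx => h x (.tail _ hx))

lemma even_foldr_max {l : List ℤ} {a : ℤ} (ha : Even a) (h : ∀ x ∈ l, Even x) :
    Even (l.foldr max a) := by
  induction l with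
  | nil => simpa
  | cons y t ih =>
    have h2 := ih fun x hx => h x (.tail _ hx)
    rw [List.foldr_cons]
    rcases max_choice y (t.foldr max a) with hm | hm <;> rw [hm]
    exacts [h y (.head _), h2]

lemma even_list_sum {l : List ℕ} (h : ∀ x ∈ l, Even x) : Even l.sum := by
  induction l with
  | nil => simp
  | cons y t ih =>
    rw [List.sum_cons]
    exact (h y (.head _)).add (ih fun x hx => h x (.tail _ hx))

lemma sum_mix (c : ℕ) : ∀ (r t t' : List ℕ), t.Sublist r → t'.Sublist r →
    (∀ x ∈ r, x ≤ c) → t.sum + t'.sum ≤ r.sum + min t.length t'.length * c := by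
  intro r
  induction r with
  | nil =>
    intro t t' ht ht' _
    simp [List.sublist_nil.mp ht, List.sublist_nil.mp ht']
  | cons x r0 ih =>
    intro t t' ht ht' hb
    have hx : x ≤ c := hb x (.head _)
    have hb0 : ∀ y ∈ r0, y ≤ c := fun y hy => hb y (.tail _ hy)
    rcases List.sublist_cons_iff.mp ht with ht | ⟨t0, rfl, ht0⟩
    · rcases List.sublist_cons_iff.mp ht' with ht' | ⟨t1, rfl, ht1⟩
      · have h := ih t t' ht ht' hb0
        simp only [List.sum_cons]
        omega
      · have h := ih t t1 ht ht1 hb0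
        have hm : min t.length t1.length ≤ min t.length (x :: t1).length := by
          simp only [List.length_cons]; omega
        have h2 := Nat.mul_le_mul_right c hm
        simp only [List.sum_cons]
        linarith
    · rcases List.sublist_cons_iff.mp ht' with ht' | ⟨t1, rfl, ht1⟩
      · have h := ih t0 t' ht0 ht' hb0
        have hm : min t0.length t'.length ≤ min (x :: t0).length t'.length := by
          simp only [List.length_cons]; omega
        have h2 := Nat.mul_le_mul_right c hm
        simp only [List.sum_cons]
        linarith
      · have h := ih t0 t1 ht0 ht1 hb0
        have hm : min (x :: t0).length (x :: t1).length = min t0.length t1.length + 1 := by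
          simp only [List.length_cons]; omega
        have h2 : min (x :: t0).length (x :: t1).length * c
            = min t0.length t1.length * c + c := by rw [hm, Nat.succ_mul]
        simp only [List.sum_cons]
        linarith


variable {adm : ℕ → ℕ → ℕ → Prop} {C : ℕ → Prop}

lemma chainFrom_cons (a x : ℕ) (rest : List ℕ) (e : ℕ) (es : List ℕ) :
    ChainFrom adm C a (x :: rest) (e :: es)
      = (C e ∧ adm a x e ∧ ChainFrom adm C e rest es) := by
  cases rest with
  | nil => rfl
  | cons y t => cases t <;> rfl

lemma chainFrom_empty (f : ℕ) (es : List ℕ) : ¬ ChainFrom adm C f [] es := by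
  cases es <;> simp [ChainFrom]

lemma chainFrom_single (f y : ℕ) (es : List ℕ) : ¬ ChainFrom adm C f [y] es := by
  cases es with
  | nil => simp [ChainFrom]
  | cons e es' =>
    rw [chainFrom_cons]
    rintro ⟨-, -, h⟩
    exact chainFrom_empty _ _ h

lemma hasChain_three (a b y : ℕ) : HasChain adm C [a, b, y] ↔ adm a b y := by
  constructor
  · rintro ⟨E, hE⟩
    cases E with
    | nil => exact hE
    | cons e es =>
      rw [show IsChainColoring adm C [a,b,y] (e::es) = ChainFrom adm C a [b,y] (e::es) from rfl,
        chainFrom_cons] at hE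
      exact absurd hE.2.2 (chainFrom_single _ _ _)
  · intro h
    exact ⟨[], h⟩

lemma hasChain_cons (a b x y : ℕ) (r : List ℕ) :
    HasChain adm C (a :: b :: x :: y :: r) ↔
      ∃ e, C e ∧ adm a b e ∧ HasChain adm C (e :: x :: y :: r) := by
  constructor
  · rintro ⟨E, hE⟩
    cases E with
    | nil => exact absurd hE (by simp [IsChainColoring, ChainFrom])
    | cons e es =>
      rw [show IsChainColoring adm C (a::b::x::y::r) (e::es)
          = ChainFrom adm C a (b::x::y::r) (e::es) from rfl, chainFrom_cons] at hE
      exact ⟨e, hE.1, hE.2.1, es, hE.2.2⟩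
  · rintro ⟨e, hCe, hadm, ⟨es, hes⟩⟩
    refine ⟨e :: es, ?_⟩
    rw [show IsChainColoring adm C (a::b::x::y::r) (e::es)
        = ChainFrom adm C a (b::x::y::r) (e::es) from rfl, chainFrom_cons]
    exact ⟨hCe, hadm, hes⟩

lemma nec (p a b e : ℕ) (r : List ℕ) (hadm : AdmOdd p a b e) (hok : Ok p (e :: r)) :
    Ok p (a :: b :: r) := by
  obtain ⟨h1, h2, h3, h4⟩ := hadm
  intro s hs hpar
  rcases List.sublist_cons_iff.mp hs with hs' | ⟨s0, rfl, hs0⟩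
  · rcases List.sublist_cons_iff.mp hs' with hs'' | ⟨s1, rfl, hs1⟩
    · -- s <+ r
      have h := hok s (hs''.trans (List.sublist_cons_self e r)) hpar
      simp only [List.sum_cons] at h ⊢
      push_cast at h ⊢
      linarith [(by exact_mod_cast h2 : (e : ℤ) ≤ a + b)]
    · -- s = b :: s1
      have h := hok (e :: s1) (hs1.cons₂ e)
        (by simpa [List.length_cons] using hpar)
      simp only [List.sum_cons, List.length_cons] at h ⊢
      push_cast at h ⊢
      linarith [(by exact_mod_cast h1 : (b : ℤ) ≤ a + e)]
  · rcases List.sublist_cons_iff.mp hs0 with hs'' | ⟨s1, rfl, hs1⟩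
    · -- s = a :: s0, s0 <+ r
      have h := hok (e :: s0) (hs''.cons₂ e)
        (by simpa [List.length_cons] using hpar)
      simp only [List.sum_cons, List.length_cons] at h ⊢
      push_cast at h ⊢
      linarith [(by exact_mod_cast h3 : (a : ℤ) ≤ b + e)]
    · -- s = a :: b :: s1
      have h := hok s1 (hs1.trans (List.sublist_cons_self e r))
        (by simp only [List.length_cons] at hpar ⊢; omega)
      simp only [List.sum_cons, List.length_cons] at h ⊢
      push_cast at h ⊢
      have h4' : (a : ℤ) + b + e + 4 ≤ 2 * p := by exact_mod_cast h4
      nlinarith [h, h4']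


lemma suf (p : ℕ) (hp : 5 ≤ p) (hodd : Odd p) (a b : ℕ) (r : List ℕ)
    (hcol : ∀ y ∈ a :: b :: r, ColorOdd p y) (hok : Ok p (a :: b :: r)) :
    ∃ e, ColorOdd p e ∧ AdmOdd p a b e ∧ Ok p (e :: r) := by
  classical
  obtain ⟨hae, ha3⟩ := hcol a (.head _)
  obtain ⟨hbe, hb3⟩ := hcol b (.tail _ (.head _))
  have hrc : ∀ y ∈ r, ColorOdd p y := fun y hy => hcol y (.tail _ (.tail _ hy))
  have hrb : ∀ y ∈ r, y ≤ p - 3 := fun y hy => by have := (hrc y hy).2; omega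
  have hA : (a : ℤ) + 3 ≤ (p : ℤ) := by exact_mod_cast ha3
  have hB : (b : ℤ) + 3 ≤ (p : ℤ) := by exact_mod_cast hb3
  have ha0 : (0 : ℤ) ≤ (a : ℤ) := Nat.cast_nonneg a
  have hb0 : (0 : ℤ) ≤ (b : ℤ) := Nat.cast_nonneg b
  set E : ℤ := ((r.sublists.filter fun t => t.length % 2 = 1).map
      (fun t => 2 * (t.sum : ℤ) - ((t.length : ℤ) - 1) * ((p : ℤ) - 2) - (r.sum : ℤ))).foldr
      max |(a : ℤ) - (b : ℤ)| with hE
  have hinit : |(a : ℤ) - (b : ℤ)| ≤ E := le_foldr_max_init _ _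
  have habs := abs_le.mp hinit
  have hE0 : 0 ≤ E := (abs_nonneg _).trans hinit
  have hlow : ∀ t : List ℕ, t.Sublist r → t.length % 2 = 1 →
      2 * (t.sum : ℤ) - ((t.length : ℤ) - 1) * ((p : ℤ) - 2) - (r.sum : ℤ) ≤ E := by
    intro t ht hpar
    exact le_foldr_max_mem _ (List.mem_map.mpr
      ⟨t, List.mem_filter.mpr ⟨List.mem_sublists.mpr ht, by simpa using hpar⟩, rfl⟩)
  have hup : ∀ c : ℤ, |(a : ℤ) - (b : ℤ)| ≤ c →
      (∀ t : List ℕ, t.Sublist r → t.length % 2 = 1 →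
        2 * (t.sum : ℤ) - ((t.length : ℤ) - 1) * ((p : ℤ) - 2) - (r.sum : ℤ) ≤ c) → E ≤ c := by
    intro c h0 h1
    refine foldr_max_le h0 ?_
    intro x hx
    obtain ⟨t, ht, rfl⟩ := List.mem_map.mp hx
    obtain ⟨ht1, ht2⟩ := List.mem_filter.mp ht
    exact h1 t (List.mem_sublists.mp ht1) (by simpa using ht2)
  have hok' : ∀ s : List ℕ, s.Sublist (a :: b :: r) → s.length % 2 = 1 →
      2 * (s.sum : ℤ) ≤ ((s.length : ℤ) - 1) * ((p : ℤ) - 2) + (a : ℤ) + b + (r.sum : ℤ) := by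
    intro s hs hpar
    have h := hok s hs hpar
    simp only [List.sum_cons] at h
    push_cast [-Nat.cast_list_sum] at h
    linarith
  have hsub_r : r.Sublist (a :: b :: r) :=
    (List.sublist_cons_self b r).trans (List.sublist_cons_self a _)
  -- Upper bound 1 : E ≤ a + b
  have hub1 : E ≤ (a : ℤ) + b := by
    refine hup _ (abs_le.mpr ⟨by linarith, by linarith⟩) ?_
    intro t ht hpar
    have h := hok' t (ht.trans hsub_r) hpar
    linarith
  -- Upper bound 2 : E + a + b + 4 ≤ 2p
  have hub2 : E ≤ 2 * (p : ℤ) - 4 - a - b := by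
    refine hup _ (abs_le.mpr ⟨by linarith, by linarith⟩) ?_
    intro t ht hpar
    have h := hok' (a :: b :: t) ((ht.cons₂ b).cons₂ a)
      (by simp only [List.length_cons]; omega)
    simp only [List.sum_cons, List.length_cons] at h
    push_cast [-Nat.cast_list_sum] at h
    linarith
  -- Upper bound 3 : E ≤ p - 3
  have hub3 : E ≤ (p : ℤ) - 3 := by
    refine hup _ (abs_le.mpr ⟨by linarith, by linarith⟩) ?_
    intro t ht hpar
    have hsum1 : t.sum ≤ r.sum := ht.sum_le_sum (fun x _ => Nat.zero_le x)
    have hsum2 : t.sum ≤ t.length * (p - 3) := by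
      have := List.sum_le_card_nsmul t (p - 3) (fun x hx => hrb x (ht.subset hx))
      simpa [smul_eq_mul] using this
    have hc1 : (t.sum : ℤ) ≤ (r.sum : ℤ) := by exact_mod_cast hsum1
    have hc2 : (t.sum : ℤ) ≤ (t.length : ℤ) * ((p : ℤ) - 3) := by
      have h := (Nat.cast_le (α := ℤ)).mpr hsum2
      push_cast [-Nat.cast_list_sum, Nat.cast_sub (show 3 ≤ p by omega)] at h
      exact h
    have hl1 : (1 : ℤ) ≤ (t.length : ℤ) := by
      have h1 : 1 ≤ t.length := by omega
      exact_mod_cast h1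
    have key : ((t.length : ℤ) - 1) * ((p : ℤ) - 3) ≤ ((t.length : ℤ) - 1) * ((p : ℤ) - 2) :=
      mul_le_mul_of_nonneg_left (by linarith) (by linarith)
    linarith
  -- Upper bound 4
  have hub4 : ∀ t' : List ℕ, t'.Sublist r → t'.length % 2 = 0 →
      E ≤ (t'.length : ℤ) * ((p : ℤ) - 2) + (r.sum : ℤ) - 2 * (t'.sum : ℤ) := by
    intro t' ht' hpar'
    have h1 := hok' (a :: t') ((ht'.trans (List.sublist_cons_self b r)).cons₂ a)
      (by simp only [List.length_cons]; omega)
    have h2 := hok' (b :: t') ((ht'.cons₂ b).cons a)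
      (by simp only [List.length_cons]; omega)
    simp only [List.sum_cons, List.length_cons] at h1 h2
    push_cast [-Nat.cast_list_sum] at h1 h2
    have h0 : |(a : ℤ) - (b : ℤ)| ≤
        (t'.length : ℤ) * ((p : ℤ) - 2) + (r.sum : ℤ) - 2 * (t'.sum : ℤ) := by
      refine abs_le.mpr ⟨?_, ?_⟩ <;> linarith
    refine hup _ h0 ?_
    intro t ht hpar
    have hmix := sum_mix (p - 3) r t t' ht ht' hrb
    have hmixZ : (t.sum : ℤ) + (t'.sum : ℤ) ≤
        (r.sum : ℤ) + (min t.length t'.length : ℤ) * ((p : ℤ) - 3) := by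
      have h := (Nat.cast_le (α := ℤ)).mpr hmix
      push_cast [-Nat.cast_list_sum, Nat.cast_sub (show 3 ≤ p by omega)] at h
      exact h
    have hminZ : 2 * (min t.length t'.length : ℤ) + 1 ≤ (t.length : ℤ) + (t'.length : ℤ) := by
      have h : 2 * min t.length t'.length + 1 ≤ t.length + t'.length := by omega
      exact_mod_cast h
    have hmin0 : (0 : ℤ) ≤ min (t.length : ℤ) (t'.length : ℤ) := le_min (Nat.cast_nonneg _) (Nat.cast_nonneg _)
    have key1 : 2 * (min t.length t'.length : ℤ) * ((p : ℤ) - 3) ≤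
        ((t.length : ℤ) + (t'.length : ℤ) - 1) * ((p : ℤ) - 3) :=
      mul_le_mul_of_nonneg_right (by linarith) (by linarith)
    have key2 : ((t.length : ℤ) + (t'.length : ℤ) - 1) * ((p : ℤ) - 3) ≤
        ((t.length : ℤ) + (t'.length : ℤ) - 1) * ((p : ℤ) - 2) :=
      mul_le_mul_of_nonneg_left (by linarith) (by linarith)
    linarith
  -- E is even
  have hevsum : Even ((r.sum : ℤ)) :=
    (Int.even_coe_nat _).mpr (even_list_sum (fun x hx => (hrc x hx).1))
  have hEeven : Even E := by
    refine even_foldr_max ?_ ?_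
    · have h := ((Int.even_coe_nat a).mpr hae).sub ((Int.even_coe_nat b).mpr hbe)
      rcases abs_choice ((a : ℤ) - b) with hh | hh <;> rw [hh]
      exacts [h, h.neg]
    · intro x hx
      obtain ⟨t, ht, rfl⟩ := List.mem_map.mp hx
      obtain ⟨ht1, ht2⟩ := List.mem_filter.mp ht
      have hpar : t.length % 2 = 1 := by simpa using ht2
      have h1 : Even ((t.length : ℤ) - 1) := by
        refine ⟨(t.length / 2 : ℕ), ?_⟩
        have : (t.length : ℤ) = 2 * ((t.length / 2 : ℕ) : ℤ) + 1 := by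
          have h2 : t.length = 2 * (t.length / 2) + 1 := by omega
          exact_mod_cast h2
        linarith
      have h3 : Even (2 * (t.sum : ℤ)) := even_two_mul _
      exact (h3.sub (h1.mul_right _)).sub hevsum
  set e := E.toNat with he
  have hcast : (e : ℤ) = E := Int.toNat_of_nonneg hE0
  obtain ⟨d, hd⟩ := hEeven
  refine ⟨e, ⟨?_, ?_⟩, ⟨?_, ?_, ?_, ?_⟩, ?_⟩
  · exact Nat.even_iff.mpr (by omega)
  · omega
  · omega
  · omega
  · omega
  · omega
  · -- Ok p (e :: r)
    intro s hs hpar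
    rcases List.sublist_cons_iff.mp hs with hs' | ⟨s1, rfl, hs1⟩
    · have h := hlow s hs' hpar
      simp only [List.sum_cons]
      push_cast [-Nat.cast_list_sum]
      linarith
    · have h := hub4 s1 hs1 (by simp only [List.length_cons] at hpar; omega)
      simp only [List.sum_cons, List.length_cons]
      push_cast [-Nat.cast_list_sum]
      linarith


-- base case : length-3 lists
lemma base (p : ℕ) (hp : 5 ≤ p) (a b y : ℕ) (hcol : ∀ z ∈ [a, b, y], ColorOdd p z) :
    AdmOdd p a b y ↔ Ok p [a, b, y] := by
  constructor
  · rintro ⟨h1, h2, h3, h4⟩ s hs hpar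
    rcases List.sublist_cons_iff.mp hs with hs | ⟨s0, rfl, hs0⟩
    · rcases List.sublist_cons_iff.mp hs with hs | ⟨s1, rfl, hs1⟩
      · rcases List.sublist_cons_iff.mp hs with hs | ⟨s2, rfl, hs2⟩
        · rw [List.sublist_nil.mp hs] at hpar; simp at hpar
        · rw [List.sublist_nil.mp hs2]
          simp only [List.sum_cons, List.sum_nil, List.length_cons, List.length_nil]
          push_cast [-Nat.cast_list_sum]
          omega
      · rcases List.sublist_cons_iff.mp hs1 with hs | ⟨s2, rfl, hs2⟩
        · rw [List.sublist_nil.mp hs]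
          simp only [List.sum_cons, List.sum_nil, List.length_cons, List.length_nil]
          push_cast [-Nat.cast_list_sum]
          omega
        · rw [List.sublist_nil.mp hs2] at hpar ⊢; simp at hpar
    · rcases List.sublist_cons_iff.mp hs0 with hs | ⟨s1, rfl, hs1⟩
      · rcases List.sublist_cons_iff.mp hs with hs | ⟨s2, rfl, hs2⟩
        · rw [List.sublist_nil.mp hs]
          simp only [List.sum_cons, List.sum_nil, List.length_cons, List.length_nil]
          push_cast [-Nat.cast_list_sum]
          omega
        · rw [List.sublist_nil.mp hs2] at hpar ⊢; simp at hpar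
      · rcases List.sublist_cons_iff.mp hs1 with hs | ⟨s2, rfl, hs2⟩
        · rw [List.sublist_nil.mp hs] at hpar ⊢; simp at hpar
        · rw [List.sublist_nil.mp hs2]
          simp only [List.sum_cons, List.sum_nil, List.length_cons, List.length_nil]
          push_cast [-Nat.cast_list_sum]
          omega
  · intro hok
    have ha := hok [a] ((List.nil_sublist [b, y]).cons₂ a) (by simp)
    have hb := hok [b] (((List.nil_sublist [y]).cons₂ b).cons a) (by simp)
    have hy := hok [y] (((List.Sublist.refl [y]).cons b).cons a) (by simp)
    have hall := hok [a, b, y] (List.Sublist.refl _) (by simp)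
    simp only [List.sum_cons, List.sum_nil, List.length_cons, List.length_nil] at ha hb hy hall
    push_cast [-Nat.cast_list_sum] at ha hb hy hall
    exact ⟨by omega, by omega, by omega, by omega⟩

lemma main (p : ℕ) (hp : 5 ≤ p) (hodd : Odd p) :
    ∀ (r : List ℕ) (a b : ℕ), r ≠ [] → (∀ y ∈ a :: b :: r, ColorOdd p y) →
      (HasChain (AdmOdd p) (ColorOdd p) (a :: b :: r) ↔ Ok p (a :: b :: r)) := by
  intro r
  induction r with
  | nil => intro a b h; exact absurd rfl h
  | cons x r0 ih =>
    intro a b _ hcol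
    cases r0 with
    | nil => exact (hasChain_three a b x).trans (base p hp a b x hcol)
    | cons y r1 =>
      rw [hasChain_cons]
      constructor
      · rintro ⟨e, hCe, hadm, hch⟩
        have hcol' : ∀ z ∈ e :: x :: y :: r1, ColorOdd p z := by
          intro z hz
          rcases List.mem_cons.mp hz with rfl | hz
          · exact hCe
          · exact hcol z (.tail _ (.tail _ hz))
        exact nec p a b e _ hadm ((ih e x (by simp) hcol').mp hch)
      · intro hok
        obtain ⟨e, hCe, hadm, hok'⟩ := suf p hp hodd a b (x :: y :: r1) hcol hok
        have hcol' : ∀ z ∈ e :: x :: y :: r1, ColorOdd p z := by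
          intro z hz
          rcases List.mem_cons.mp hz with rfl | hz
          · exact hCe
          · exact hcol z (.tail _ (.tail _ hz))
        exact ⟨e, hCe, hadm, (ih e x (by simp) hcol').mpr hok'⟩


lemma ok_iff (p m : ℕ) (i : Fin m → ℕ) :
    Ok p (List.ofFn i) ↔
      ∀ (k : ℕ) (S : Finset (Fin m)), 2 * k + 1 ≤ m → S.card = 2 * k + 1 →
        2 * ∑ s ∈ S, (i s : ℤ) ≤ 2 * (k : ℤ) * ((p : ℤ) - 2) + ∑ t, (i t : ℤ) := by
  classical
  have hlen : (List.ofFn i).length = m := List.length_ofFn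
  have hofs : ((List.ofFn i).sum : ℤ) = ∑ t, (i t : ℤ) := by
    rw [List.sum_ofFn]
    push_cast
    rfl
  constructor
  · intro hok k S hk hcard
    set L : List (Fin m) := S.sort (· ≤ ·) with hL
    have hpw : L.Pairwise (· < ·) := (S.sortedLT_sort).pairwise
    have hLlen : L.length = 2 * k + 1 := by rw [hL, Finset.length_sort, hcard]
    -- view it as a list of indices into List.ofFn i
    set J : List (Fin (List.ofFn i).length) := L.map (Fin.cast hlen.symm) with hJ
    have hpwJ : J.Pairwise (· < ·) := by
      rw [hJ, List.pairwise_map]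
      exact hpw
    have hmap : J.map (fun x => (List.ofFn i)[x]) = L.map i := by
      rw [hJ, List.map_map]
      refine List.map_congr_left ?_
      intro x _
      simp only [Function.comp_apply, Fin.getElem_fin, List.getElem_ofFn]
      rfl
    have hsub : (L.map i).Sublist (List.ofFn i) := by
      rw [← hmap]; exact List.map_getElem_sublist hpwJ
    have hsum : (L.map i).sum = ∑ s ∈ S, i s := by
      rw [← Finset.sort_toFinset S (· ≤ ·), List.sum_toFinset i (S.sort_nodup (· ≤ ·))]
    have h := hok (L.map i) hsub (by simp [hLlen])
    rw [List.length_map, hLlen] at h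
    rw [hsum] at h
    rw [hofs] at h
    have hcast : ((∑ s ∈ S, i s : ℕ) : ℤ) = ∑ s ∈ S, (i s : ℤ) := by push_cast; rfl
    rw [hcast] at h
    push_cast at h
    linarith
  · intro h s hs hpar
    obtain ⟨is, rfl, hpw⟩ := List.sublist_eq_map_getElem hs
    set js : List (Fin m) := is.map (Fin.cast hlen) with hjs
    have hpwj : js.Pairwise (· < ·) := by
      rw [hjs, List.pairwise_map]
      exact hpw
    have hnd : js.Nodup := hpwj.imp (fun h => ne_of_lt h)
    set S : Finset (Fin m) := js.toFinset with hS
    have hcard : S.card = is.length := by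
      rw [hS, List.toFinset_card_of_nodup hnd, hjs, List.length_map]
    have hmap : js.map i = is.map (fun x => (List.ofFn i)[x]) := by
      rw [hjs, List.map_map]
      refine (List.map_congr_left ?_).symm
      intro x _
      simp only [Function.comp_apply, Fin.getElem_fin, List.getElem_ofFn]
      rfl
    have hsum : ∑ s ∈ S, i s = (is.map (fun x => (List.ofFn i)[x])).sum := by
      rw [hS, List.sum_toFinset i hnd, hmap]
    have hlength : (is.map (fun x => (List.ofFn i)[x])).length = is.length :=
      List.length_map _
    have hpar' : is.length % 2 = 1 := by simpa using hpar
    set k : ℕ := is.length / 2 with hk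
    have hk1 : is.length = 2 * k + 1 := by omega
    have hle : 2 * k + 1 ≤ m := by
      have h2 := hs.length_le
      rw [hlength] at h2
      omega
    have hh := h k S hle (by rw [hcard, hk1])
    have hcast : ((∑ s ∈ S, i s : ℕ) : ℤ) = ∑ s ∈ S, (i s : ℤ) := by push_cast; rfl
    rw [hsum] at hcast
    rw [hcast, hofs, hlength, hk1]
    push_cast
    linarith

end Stmt0Aux

/-- for odd `p ≥ 5`, `m ≥ 3` and colors `i_1, …, i_m ∈ C_p` not all zero,
a chain coloring for `(i_1, …, i_m)` exists iff for every `k` with `2k+1 ≤ m` and every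
subset `S ⊆ {1, …, m}` of cardinality `2k+1` one has
`2 ∑_{s ∈ S} i_s ≤ 2k(p-2) + ∑_t i_t`. -/
theorem stmt0 (p : ℕ) (hp : 5 ≤ p) (hodd : Odd p) (m : ℕ) (hm : 3 ≤ m)
    (i : Fin m → ℕ) (hi : ∀ s, ColorOdd p (i s)) (hne : ∃ s, i s ≠ 0) :
    HasChain (AdmOdd p) (ColorOdd p) (List.ofFn i) ↔
      ∀ (k : ℕ) (S : Finset (Fin m)), 2 * k + 1 ≤ m → S.card = 2 * k + 1 →
        2 * ∑ s ∈ S, (i s : ℤ) ≤ 2 * (k : ℤ) * ((p : ℤ) - 2) + ∑ t, (i t : ℤ) := by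
  have hcol : ∀ y ∈ List.ofFn i, ColorOdd p y := by
    intro y hy
    obtain ⟨s, rfl⟩ := (List.mem_ofFn (f := i) (a := y)).mp hy
    exact hi s
  rw [← Stmt0Aux.ok_iff p m i]
  obtain ⟨n, rfl⟩ : ∃ n, m = n + 3 := ⟨m - 3, by omega⟩
  rw [List.ofFn_succ, List.ofFn_succ] at hcol ⊢
  refine Stmt0Aux.main p hp hodd _ _ _ ?_ hcol
  intro h
  have hlen := congrArg List.length h
  simp at hlen
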